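/- Let s : I → ℝ be twice differentiable with s(a) = 0, s > 0 on I \ {a}, satisfying 2·s·s'' − (s')² = s²·(3s + 2t)·(s + 2t) and s'' = (s')²/(2s) + (1/2)s(3s+2t)(s+2t) on I \ {a}. Define σ(t) := −√(s(t)) for t ≤ a and σ(t) := +√(s(t)) for t ≥ a. Then σ is twice differentiable on I and satisfies 4·σ''(t) = σ(t)·(3σ(t)² + 2t)·(σ(t)² + 2t) on all of I. -/

import Mathlib

open Set Filter intervalIntegral
open scoped Topology

set_option maxHeartbeats 2000000 in
theorem stmt_9 (I : Set ℝ) (hI : IsOpen I) (hI' : IsPreconnected I) (s : ℝ → ℝ) (a : ℝ) (ha : a ∈ I)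
    (hs1 : ∀ t ∈ I, DifferentiableAt ℝ s t)
    (hs2 : ∀ t ∈ I, DifferentiableAt ℝ (deriv s) t)
    (h0 : s a = 0) (hpos : ∀ t ∈ I \ {a}, 0 < s t)
    (heq1 : ∀ t ∈ I \ {a}, 2 * s t * deriv (deriv s) t - (deriv s t) ^ 2
      = (s t) ^ 2 * (3 * s t + 2 * t) * (s t + 2 * t))
    (heq2 : ∀ t ∈ I \ {a}, deriv (deriv s) t
      = (deriv s t) ^ 2 / (2 * s t)
        + (1 / 2) * s t * (3 * s t + 2 * t) * (s t + 2 * t)) :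
    (∀ t ∈ I, DifferentiableAt ℝ
      (fun u => if u ≤ a then -Real.sqrt (s u) else Real.sqrt (s u)) t) ∧
    (∀ t ∈ I, DifferentiableAt ℝ
      (deriv (fun u => if u ≤ a then -Real.sqrt (s u) else Real.sqrt (s u))) t) ∧
    (∀ t ∈ I, 4 * deriv (deriv (fun u => if u ≤ a then -Real.sqrt (s u) else Real.sqrt (s u))) t
      = (if t ≤ a then -Real.sqrt (s t) else Real.sqrt (s t))
        * (3 * (if t ≤ a then -Real.sqrt (s t) else Real.sqrt (s t)) ^ 2 + 2 * t)
        * ((if t ≤ a then -Real.sqrt (s t) else Real.sqrt (s t)) ^ 2 + 2 * t)) := by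
  set σ : ℝ → ℝ := fun u => if u ≤ a then -Real.sqrt (s u) else Real.sqrt (s u) with hσdef
  have hIa : I ∈ 𝓝 a := hI.mem_nhds ha
  have hsnn : ∀ t ∈ I, 0 ≤ s t := by
    intro t ht
    rcases eq_or_ne t a with rfl | h
    · exact le_of_eq h0.symm
    · exact (hpos t ⟨ht, h⟩).le
  have hσa : σ a = 0 := by simp [hσdef, h0]
  have hσsq : ∀ t ∈ I, σ t ^ 2 = s t := by
    intro t ht
    simp only [hσdef]
    split <;> [rw [neg_pow]; skip] <;> simp [Real.sq_sqrt (hsnn t ht)]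
  have hσabs : ∀ t, |σ t| = Real.sqrt (s t) := by
    intro t
    simp only [hσdef]
    split <;> simp [abs_of_nonneg (Real.sqrt_nonneg _)]
  have hscont : ∀ t ∈ I, ContinuousAt s t := fun t ht => (hs1 t ht).continuousAt
  have hs'cont : ∀ t ∈ I, ContinuousAt (deriv s) t := fun t ht => (hs2 t ht).continuousAt
  -- continuity of σ at a
  have hσtend : Tendsto σ (𝓝 a) (𝓝 0) := by
    apply squeeze_zero_norm (fun t => le_of_eq (hσabs t))
    have : Tendsto (fun t => Real.sqrt (s t)) (𝓝 a) (𝓝 (Real.sqrt (s a))) :=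
      (Real.continuous_sqrt.continuousAt).comp (hscont a ha)
    simpa [h0] using this
  have hσcontA : ContinuousAt σ a := by
    rw [ContinuousAt, hσa]; exact hσtend
  -- s'(a) = 0
  have hd0 : deriv s a = 0 := by
    apply IsLocalMin.deriv_eq_zero
    filter_upwards [hIa] with t ht
    rw [h0]; exact hsnn t ht
  -- s''(a)/2 as limit of s t/(t-a)^2 (L'Hopital)
  set c : ℝ := deriv (deriv s) a with hcdef
  have hIne : I \ {a} ∈ 𝓝[≠] a := diff_mem_nhdsWithin_compl hIa {a}
  have hdiv2 : Tendsto (fun x => deriv s x / (2 * (x - a))) (𝓝[≠] a) (𝓝 (c / 2)) := by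
    have h1 : Tendsto (slope (deriv s) a) (𝓝[≠] a) (𝓝 c) :=
      hasDerivAt_iff_tendsto_slope.1 (hs2 a ha).hasDerivAt
    refine (h1.div_const 2).congr (fun x => ?_)
    rw [slope_def_field, hd0, sub_zero, div_div, mul_comm]
  have hc2 : Tendsto (fun t => s t / (t - a) ^ 2) (𝓝[≠] a) (𝓝 (c / 2)) := by
    apply HasDerivAt.lhopital_zero_nhdsNE (f' := fun x => deriv s x) (g' := fun x => 2 * (x - a))
    · filter_upwards [hIne] with x hx
      exact (hs1 x hx.1).hasDerivAt
    · refine Eventually.of_forall (fun x => ?_)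
      exact (((hasDerivAt_id x).sub_const a).pow 2).congr_deriv (by simp)
    · filter_upwards [self_mem_nhdsWithin] with x hx
      simpa [sub_eq_zero] using hx
    · have := (hscont a ha).tendsto.mono_left (nhdsWithin_le_nhds (s := {a}ᶜ))
      rwa [h0] at this
    · have : Tendsto (fun x : ℝ => (x - a) ^ 2) (𝓝 a) (𝓝 ((a - a) ^ 2)) := by
        exact (continuous_id.sub continuous_const).pow 2 |>.tendsto a
      simp only [sub_self] at this
      simpa using this.mono_left (nhdsWithin_le_nhds (s := {a}ᶜ))
    · exact hdiv2
  have hcnn : 0 ≤ c / 2 := by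
    refine ge_of_tendsto hc2 ?_
    filter_upwards [hIne] with t ht
    exact div_nonneg (hsnn t ht.1) (sq_nonneg _)
  set L : ℝ := Real.sqrt (c / 2) with hLdef
  have hslope : HasDerivAt σ L a := by
    rw [hasDerivAt_iff_tendsto_slope]
    have h1 : Tendsto (fun t => Real.sqrt (s t / (t - a) ^ 2)) (𝓝[≠] a) (𝓝 L) :=
      (Real.continuous_sqrt.continuousAt.tendsto).comp hc2
    refine h1.congr' ?_
    filter_upwards [hIne] with t ht
    have hta : t ≠ a := by simpa using ht.2
    rw [slope_def_field, hσa, sub_zero, Real.sqrt_div (hsnn t ht.1), Real.sqrt_sq_eq_abs]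
    simp only [hσdef]
    split
    · next h =>
      have hlt : t < a := lt_of_le_of_ne h hta
      rw [abs_of_neg (by linarith : t - a < 0)]
      rw [div_neg, neg_div]
    · next h =>
      have hlt : a < t := lt_of_not_ge h
      rw [abs_of_pos (by linarith : 0 < t - a)]
  have hderiva : deriv σ a = L := hslope.deriv
  -- off a: derivative of σ
  set g : ℝ → ℝ := fun t => deriv s t / (2 * σ t) with hgdef
  have hsqrtD : ∀ t ∈ I, t ≠ a → HasDerivAt (fun u => Real.sqrt (s u))
      (deriv s t / (2 * Real.sqrt (s t))) t := by
    intro t ht hta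
    have hne : s t ≠ 0 := (hpos t ⟨ht, hta⟩).ne'
    have := (Real.hasDerivAt_sqrt hne).comp t (hs1 t ht).hasDerivAt
    refine this.congr_deriv ?_
    ring
  have hσne : ∀ t ∈ I, t ≠ a → σ t ≠ 0 := by
    intro t ht hta h
    have := hσsq t ht
    rw [h] at this
    exact (hpos t ⟨ht, hta⟩).ne (by simpa using this)
  have hgd : ∀ t ∈ I, t ≠ a → HasDerivAt σ (g t) t := by
    intro t ht hta
    rcases lt_or_gt_of_ne hta with hlt | hgt
    · have hev : σ =ᶠ[𝓝 t] (fun u => -Real.sqrt (s u)) := by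
        filter_upwards [Iio_mem_nhds hlt] with u hu
        simp only [hσdef, if_pos (le_of_lt (mem_Iio.mp hu))]
      have hst : σ t = -Real.sqrt (s t) := by simp [hσdef, hlt.le]
      have hval : g t = -(deriv s t / (2 * Real.sqrt (s t))) := by
        simp only [hgdef]
        rw [hst, mul_neg, div_neg]
      rw [hval]
      exact ((hsqrtD t ht hta).neg).congr_of_eventuallyEq hev
    · have hev : σ =ᶠ[𝓝 t] (fun u => Real.sqrt (s u)) := by
        filter_upwards [Ioi_mem_nhds hgt] with u hu
        simp only [hσdef, if_neg (not_le_of_gt (mem_Ioi.mp hu))]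
      have hst : σ t = Real.sqrt (s t) := by simp [hσdef, not_le_of_gt hgt]
      have hval : g t = deriv s t / (2 * Real.sqrt (s t)) := by
        simp only [hgdef]
        rw [hst]
      rw [hval]
      exact (hsqrtD t ht hta).congr_of_eventuallyEq hev
  have hσdiff : ∀ t ∈ I, DifferentiableAt ℝ σ t := by
    intro t ht
    rcases eq_or_ne t a with rfl | hta
    · exact hslope.differentiableAt
    · exact (hgd t ht hta).differentiableAt
  have hderiv : ∀ t ∈ I, t ≠ a → deriv σ t = g t := fun t ht hta => (hgd t ht hta).deriv
  have hσcont : ∀ t ∈ I, ContinuousAt σ t := by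
    intro t ht
    rcases eq_or_ne t a with rfl | hta
    · exact hσcontA
    · exact (hσdiff t ht).continuousAt
  -- second derivative off a
  set F : ℝ → ℝ := fun t => σ t * (3 * σ t ^ 2 + 2 * t) * (σ t ^ 2 + 2 * t) / 4 with hFdef
  have hgders : ∀ t ∈ I, t ≠ a → HasDerivAt g (F t) t := by
    intro t ht hta
    have hne := hσne t ht hta
    have h2ne : 2 * σ t ≠ 0 := by simpa using hne
    have Hnum : HasDerivAt (fun u => deriv s u) (deriv (deriv s) t) t := (hs2 t ht).hasDerivAt
    have Hden : HasDerivAt (fun u => 2 * σ u) (2 * g t) t := (hgd t ht hta).const_mul 2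
    have H := Hnum.div Hden h2ne
    refine H.congr_deriv ?_
    have key := heq1 t ⟨ht, hta⟩
    rw [← hσsq t ht] at key
    have hgt : g t = deriv s t / (2 * σ t) := by simp [hgdef]
    rw [hgt]
    simp only [hFdef]
    field_simp
    ring_nf
    ring_nf at key
    nlinarith [key, sq_nonneg (σ t)]
  have hopen : IsOpen (I \ {a}) := hI.sdiff isClosed_singleton
  have hdd : ∀ t ∈ I, t ≠ a → HasDerivAt (deriv σ) (F t) t := by
    intro t ht hta
    refine (hgders t ht hta).congr_of_eventuallyEq ?_
    filter_upwards [hopen.mem_nhds ⟨ht, hta⟩] with u hu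
    exact hderiv u hu.1 (by simpa using hu.2)
  -- interval [p,q] around a inside I
  obtain ⟨ε, hε, hball⟩ := Metric.isOpen_iff.1 hI a ha
  set p : ℝ := a - ε / 2 with hpdef
  set q : ℝ := a + ε / 2 with hqdef
  have hpa : p < a := by simp [hpdef]; linarith
  have haq : a < q := by simp [hqdef]; linarith
  have hpqI : Icc p q ⊆ I := by
    intro x hx
    apply hball
    rw [Metric.mem_ball, Real.dist_eq, abs_sub_lt_iff]
    constructor <;> [skip; skip] <;> simp [hpdef, hqdef] at hx ⊢ <;> linarith [hx.1, hx.2]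
  -- E and G
  set G : ℝ → ℝ := fun t => deriv s t * (3 * s t + 2 * t) * (s t + 2 * t) / 4 with hGdef
  set E : ℝ → ℝ := fun t => (deriv s t) ^ 2 / (4 * s t) with hEdef
  have hGcont : ∀ t ∈ I, ContinuousAt G t := by
    intro t ht
    exact (((hs'cont t ht).mul (((hscont t ht).const_mul 3).add (continuousAt_const.mul continuousAt_id))).mul
      ((hscont t ht).add (continuousAt_const.mul continuousAt_id))).div_const 4
  have hEd : ∀ t ∈ I, t ≠ a → HasDerivAt E (G t) t := by
    intro t ht hta
    have hne : s t ≠ 0 := (hpos t ⟨ht, hta⟩).ne'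
    have h4ne : 4 * s t ≠ 0 := by simpa using hne
    have Hnum : HasDerivAt (fun u => (deriv s u) ^ 2) (2 * deriv s t ^ 1 * deriv (deriv s) t) t :=
      (hs2 t ht).hasDerivAt.pow 2
    have Hden : HasDerivAt (fun u => 4 * s u) (4 * deriv s t) t := by
      simpa using ((hs1 t ht).hasDerivAt.const_mul 4)
    have H := Hnum.div Hden h4ne
    refine H.congr_deriv ?_
    have key := heq1 t ⟨ht, hta⟩
    simp only [hGdef]
    field_simp
    linear_combination (deriv s t) * key
  have hEg : ∀ t ∈ I, t ≠ a → (g t) ^ 2 = E t := by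
    intro t ht hta
    have hne := hσne t ht hta
    simp only [hgdef, hEdef]
    rw [div_pow, mul_pow]
    rw [hσsq t ht]
    norm_num
  -- bound on G
  obtain ⟨M, hM⟩ : ∃ M, ∀ x ∈ Icc p q, |G x| ≤ M := by
    obtain ⟨M, hM⟩ := (isCompact_Icc (a := p) (b := q)).exists_bound_of_continuousOn
      (fun x hx => (hGcont x (hpqI hx)).continuousWithinAt)
    exact ⟨M, fun x hx => by simpa using hM x hx⟩
  have hMnn : 0 ≤ M := le_trans (abs_nonneg _) (hM a ⟨hpa.le, haq.le⟩)
  have hIocI : Ioc a q ⊆ I \ {a} := by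
    intro x hx
    refine ⟨hpqI ⟨le_trans hpa.le hx.1.le, hx.2⟩, by simpa using (ne_of_gt hx.1)⟩
  have hIcoI : Ico p a ⊆ I \ {a} := by
    intro x hx
    refine ⟨hpqI ⟨hx.1, le_trans hx.2.le haq.le⟩, by simpa using (ne_of_lt hx.2)⟩
  have hGcontOn : ContinuousOn G (Icc p q) := fun x hx => (hGcont x (hpqI hx)).continuousWithinAt
  have hEconR : ∀ t ∈ Ioc a q, E t = E q - ∫ x in t..q, G x := by
    intro t hht
    have hsub : uIcc t q ⊆ Ioc a q := by
      rw [uIcc_of_le hht.2]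
      exact fun x hx => ⟨lt_of_lt_of_le hht.1 hx.1, hx.2⟩
    have h1 : ∀ x ∈ uIcc t q, HasDerivAt E (G x) x := fun x hx =>
      hEd x (hIocI (hsub hx)).1 (by simpa using (hIocI (hsub hx)).2)
    have h2 : IntervalIntegrable G MeasureTheory.volume t q := by
      apply ContinuousOn.intervalIntegrable
      intro x hx
      exact (hGcont x (hIocI (hsub hx)).1).continuousWithinAt
    have h3 := intervalIntegral.integral_eq_sub_of_hasDerivAt h1 h2
    linarith [h3]
  have hintsub : ∀ t ∈ Ioc a q, IntervalIntegrable G MeasureTheory.volume a t ∧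
      IntervalIntegrable G MeasureTheory.volume t q := by
    intro t hht
    constructor <;> apply ContinuousOn.intervalIntegrable <;> apply hGcontOn.mono
    · rw [uIcc_of_le hht.1.le]
      exact fun x hx => ⟨le_trans hpa.le hx.1, le_trans hx.2 hht.2⟩
    · rw [uIcc_of_le hht.2]
      exact fun x hx => ⟨le_trans hpa.le (le_trans hht.1.le hx.1), hx.2⟩
  have hIntR : Tendsto (fun t => ∫ x in t..q, G x) (𝓝[>] a) (𝓝 (∫ x in a..q, G x)) := by
    have hdiff : ∀ t ∈ Ioc a q, ‖(∫ x in t..q, G x) - ∫ x in a..q, G x‖ ≤ M * (t - a) := by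
      intro t hht
      have hadd := intervalIntegral.integral_add_adjacent_intervals (hintsub t hht).1 (hintsub t hht).2
      have h5 : (∫ x in t..q, G x) - ∫ x in a..q, G x = -∫ x in a..t, G x := by
        rw [← hadd]; ring
      rw [h5, norm_neg]
      have h6 : ∀ x ∈ uIoc a t, ‖G x‖ ≤ M := by
        intro x hx
        rw [uIoc_of_le hht.1.le] at hx
        exact hM x ⟨le_trans hpa.le hx.1.le, le_trans hx.2 hht.2⟩
      calc ‖∫ x in a..t, G x‖ ≤ M * |t - a| := intervalIntegral.norm_integral_le_of_norm_le_const h6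
        _ = M * (t - a) := by rw [abs_of_nonneg (by linarith [hht.1] : (0:ℝ) ≤ t - a)]
    have hz : Tendsto (fun t => (∫ x in t..q, G x) - ∫ x in a..q, G x) (𝓝[>] a) (𝓝 0) := by
      refine squeeze_zero_norm' (a := fun t => M * (t - a)) ?_ ?_
      · filter_upwards [Ioc_mem_nhdsGT_of_mem (⟨le_refl a, haq⟩ : a ∈ Ico a q)] with t hht
        exact hdiff t hht
      · have : Tendsto (fun t : ℝ => M * (t - a)) (𝓝 a) (𝓝 (M * (a - a))) :=
          (tendsto_const_nhds.mul (tendsto_id.sub tendsto_const_nhds))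
        simp only [sub_self, mul_zero] at this
        exact this.mono_left nhdsWithin_le_nhds
    have := hz.add_const (∫ x in a..q, G x)
    simpa using this
  have hEplusR : Tendsto E (𝓝[>] a) (𝓝 (E q - ∫ x in a..q, G x)) := by
    refine Tendsto.congr' ?_ (tendsto_const_nhds.sub hIntR)
    filter_upwards [Ioc_mem_nhdsGT_of_mem (⟨le_refl a, haq⟩ : a ∈ Ico a q)] with t hht
    exact (hEconR t hht).symm
  -- left side FTC
  have hEconL : ∀ t ∈ Ico p a, E t = E p + ∫ x in p..t, G x := by
    intro t hht
    have hsub : uIcc p t ⊆ Ico p a := by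
      rw [uIcc_of_le hht.1]
      exact fun x hx => ⟨hx.1, lt_of_le_of_lt hx.2 hht.2⟩
    have h1 : ∀ x ∈ uIcc p t, HasDerivAt E (G x) x := fun x hx =>
      hEd x (hIcoI (hsub hx)).1 (by simpa using (hIcoI (hsub hx)).2)
    have h2 : IntervalIntegrable G MeasureTheory.volume p t := by
      apply ContinuousOn.intervalIntegrable
      intro x hx
      exact (hGcont x (hIcoI (hsub hx)).1).continuousWithinAt
    have h3 := intervalIntegral.integral_eq_sub_of_hasDerivAt h1 h2
    linarith [h3]
  have hintsubL : ∀ t ∈ Ico p a, IntervalIntegrable G MeasureTheory.volume p t ∧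
      IntervalIntegrable G MeasureTheory.volume t a := by
    intro t hht
    constructor <;> apply ContinuousOn.intervalIntegrable <;> apply hGcontOn.mono
    · rw [uIcc_of_le hht.1]
      exact fun x hx => ⟨hx.1, le_trans hx.2 (le_trans hht.2.le haq.le)⟩
    · rw [uIcc_of_le hht.2.le]
      exact fun x hx => ⟨le_trans hht.1 hx.1, le_trans hx.2 haq.le⟩
  have hIntL : Tendsto (fun t => ∫ x in p..t, G x) (𝓝[<] a) (𝓝 (∫ x in p..a, G x)) := by
    have hdiff : ∀ t ∈ Ico p a, ‖(∫ x in p..t, G x) - ∫ x in p..a, G x‖ ≤ M * (a - t) := by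
      intro t hht
      have hadd := intervalIntegral.integral_add_adjacent_intervals (hintsubL t hht).1 (hintsubL t hht).2
      have h5 : (∫ x in p..t, G x) - ∫ x in p..a, G x = -∫ x in t..a, G x := by
        rw [← hadd]; ring
      rw [h5, norm_neg]
      have h6 : ∀ x ∈ uIoc t a, ‖G x‖ ≤ M := by
        intro x hx
        rw [uIoc_of_le hht.2.le] at hx
        exact hM x ⟨le_trans hht.1 hx.1.le, le_trans hx.2 haq.le⟩
      calc ‖∫ x in t..a, G x‖ ≤ M * |a - t| := intervalIntegral.norm_integral_le_of_norm_le_const h6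
        _ = M * (a - t) := by rw [abs_of_nonneg (by linarith [hht.2] : (0:ℝ) ≤ a - t)]
    have hz : Tendsto (fun t => (∫ x in p..t, G x) - ∫ x in p..a, G x) (𝓝[<] a) (𝓝 0) := by
      refine squeeze_zero_norm' (a := fun t => M * (a - t)) ?_ ?_
      · filter_upwards [Ico_mem_nhdsLT_of_mem (⟨hpa, le_refl a⟩ : a ∈ Ioc p a)] with t hht
        exact hdiff t hht
      · have : Tendsto (fun t : ℝ => M * (a - t)) (𝓝 a) (𝓝 (M * (a - a))) :=
          (tendsto_const_nhds.mul (tendsto_const_nhds.sub tendsto_id))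
        simp only [sub_self, mul_zero] at this
        exact this.mono_left nhdsWithin_le_nhds
    have := hz.add_const (∫ x in p..a, G x)
    simpa using this
  have hEplusL : Tendsto E (𝓝[<] a) (𝓝 (E p + ∫ x in p..a, G x)) := by
    refine Tendsto.congr' ?_ (tendsto_const_nhds.add hIntL)
    filter_upwards [Ico_mem_nhdsLT_of_mem (⟨hpa, le_refl a⟩ : a ∈ Ioc p a)] with t hht
    exact (hEconL t hht).symm
  have hσcontOn : ∀ J : Set ℝ, J ⊆ I → ContinuousOn σ J :=
    fun J hJ x hx => (hσcont x (hJ hx)).continuousWithinAt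
  have hMVTR : ∀ t ∈ Ioc a q, ∃ ξ ∈ Ioo a t, g ξ = σ t / (t - a) := by
    intro t hht
    have hIcc : Icc a t ⊆ I := fun x hx => hpqI ⟨le_trans hpa.le hx.1, le_trans hx.2 hht.2⟩
    obtain ⟨ξ, hξ, hval⟩ := exists_hasDerivAt_eq_slope σ g hht.1 (hσcontOn _ hIcc)
      (fun x hx => hgd x (hIcc ⟨hx.1.le, hx.2.le⟩) (ne_of_gt hx.1))
    exact ⟨ξ, hξ, by rw [hval, hσa, sub_zero]⟩
  have hMVTL : ∀ t ∈ Ico p a, ∃ ξ ∈ Ioo t a, g ξ = σ t / (t - a) := by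
    intro t hht
    have hIcc : Icc t a ⊆ I := fun x hx => hpqI ⟨le_trans hht.1 hx.1, le_trans hx.2 haq.le⟩
    obtain ⟨ξ, hξ, hval⟩ := exists_hasDerivAt_eq_slope σ g hht.2 (hσcontOn _ hIcc)
      (fun x hx => hgd x (hIcc ⟨hx.1.le, hx.2.le⟩) (ne_of_lt hx.2))
    refine ⟨ξ, hξ, ?_⟩
    rw [hval, hσa]
    have h1 : a - t ≠ 0 := by intro h; have := hht.2; linarith [sub_eq_zero.1 h]
    have h2 : t - a ≠ 0 := by intro h; have := hht.2; linarith [sub_eq_zero.1 h]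
    field_simp
    ring
  have hsqslope : Tendsto (fun t => (σ t / (t - a)) ^ 2) (𝓝[≠] a) (𝓝 (c / 2)) := by
    refine hc2.congr' ?_
    filter_upwards [hIne] with t ht
    rw [div_pow, hσsq t ht.1]
  have hEcR : Tendsto E (𝓝[>] a) (𝓝 (c / 2)) := by
    have h2 : Tendsto (fun t => (σ t / (t - a)) ^ 2) (𝓝[>] a)
        (𝓝 (E q - ∫ x in a..q, G x)) := by
      rw [Metric.tendsto_nhdsWithin_nhds] at hEplusR ⊢
      intro ε hε
      obtain ⟨δ, hδ, hδ'⟩ := hEplusR ε hε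
      refine ⟨min δ (q - a), lt_min hδ (by linarith), ?_⟩
      intro t hta hdist
      have h1 : a < t := hta
      have hdist' : t - a < min δ (q - a) := by
        rw [Real.dist_eq, abs_of_pos (by linarith)] at hdist; exact hdist
      have htq : t ≤ q := by
        have := lt_of_lt_of_le hdist' (min_le_right _ _); linarith
      obtain ⟨ξ, hξ, hval⟩ := hMVTR t ⟨h1, htq⟩
      have hξI : ξ ∈ I := hpqI ⟨by linarith [hξ.1], by linarith [hξ.2]⟩
      have heqv : (σ t / (t - a)) ^ 2 = E ξ := by rw [← hval]; exact hEg ξ hξI (ne_of_gt hξ.1)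
      rw [heqv]
      refine hδ' (show ξ ∈ Ioi a from hξ.1) ?_
      rw [Real.dist_eq, abs_of_pos (by linarith [hξ.1] : (0:ℝ) < ξ - a)]
      have := lt_of_lt_of_le hdist' (min_le_left _ _)
      linarith [hξ.2]
    have h3 := hsqslope.mono_left
      (nhdsWithin_mono a (fun x (hx : x ∈ Ioi a) => (ne_of_gt hx : x ≠ a)))
    have huniq := tendsto_nhds_unique h2 h3
    rwa [huniq] at hEplusR
  have hEcL : Tendsto E (𝓝[<] a) (𝓝 (c / 2)) := by
    have h2 : Tendsto (fun t => (σ t / (t - a)) ^ 2) (𝓝[<] a)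
        (𝓝 (E p + ∫ x in p..a, G x)) := by
      rw [Metric.tendsto_nhdsWithin_nhds] at hEplusL ⊢
      intro ε hε
      obtain ⟨δ, hδ, hδ'⟩ := hEplusL ε hε
      refine ⟨min δ (a - p), lt_min hδ (by linarith), ?_⟩
      intro t hta hdist
      have h1 : t < a := hta
      have hdist' : a - t < min δ (a - p) := by
        rw [Real.dist_eq, abs_of_neg (by linarith : t - a < 0)] at hdist
        linarith [hdist]
      have htp : p ≤ t := by
        have := lt_of_lt_of_le hdist' (min_le_right _ _); linarith
      obtain ⟨ξ, hξ, hval⟩ := hMVTL t ⟨htp, h1⟩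
      have hξI : ξ ∈ I := hpqI ⟨by linarith [hξ.1], by linarith [hξ.2]⟩
      have heqv : (σ t / (t - a)) ^ 2 = E ξ := by rw [← hval]; exact hEg ξ hξI (ne_of_lt hξ.2)
      rw [heqv]
      refine hδ' (show ξ ∈ Iio a from hξ.2) ?_
      rw [Real.dist_eq, abs_of_neg (by linarith [hξ.2] : ξ - a < 0)]
      have := lt_of_lt_of_le hdist' (min_le_left _ _)
      linarith [hξ.1]
    have h3 := hsqslope.mono_left
      (nhdsWithin_mono a (fun x (hx : x ∈ Iio a) => (ne_of_lt hx : x ≠ a)))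
    have huniq := tendsto_nhds_unique h2 h3
    rwa [huniq] at hEplusL
  have hgcont : ∀ t ∈ I, t ≠ a → ContinuousAt g t := by
    intro t ht hta
    have h2ne : 2 * σ t ≠ 0 := by simpa using hσne t ht hta
    exact (hs'cont t ht).div (continuousAt_const.mul (hσcont t ht)) h2ne
  have habsR : Tendsto (fun t => |g t|) (𝓝[>] a) (𝓝 L) := by
    have h1 : Tendsto (fun t => Real.sqrt (E t)) (𝓝[>] a) (𝓝 L) := by
      rw [hLdef]
      exact (Real.continuous_sqrt.continuousAt.tendsto).comp hEcR
    refine h1.congr' ?_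
    filter_upwards [Ioc_mem_nhdsGT_of_mem (⟨le_refl a, haq⟩ : a ∈ Ico a q)] with t hht
    rw [← hEg t (hIocI hht).1 (by simpa using (hIocI hht).2), Real.sqrt_sq_eq_abs]
  have habsL : Tendsto (fun t => |g t|) (𝓝[<] a) (𝓝 L) := by
    have h1 : Tendsto (fun t => Real.sqrt (E t)) (𝓝[<] a) (𝓝 L) := by
      rw [hLdef]
      exact (Real.continuous_sqrt.continuousAt.tendsto).comp hEcL
    refine h1.congr' ?_
    filter_upwards [Ico_mem_nhdsLT_of_mem (⟨hpa, le_refl a⟩ : a ∈ Ioc p a)] with t hht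
    rw [← hEg t (hIcoI hht).1 (by simpa using (hIcoI hht).2), Real.sqrt_sq_eq_abs]
  have hgR : Tendsto g (𝓝[>] a) (𝓝 L) := by
    rcases eq_or_lt_of_le hcnn with hc0 | hcpos
    · have hL0 : L = 0 := by rw [hLdef, ← hc0, Real.sqrt_zero]
      rw [hL0]
      rw [tendsto_zero_iff_abs_tendsto_zero]
      rw [hL0] at habsR
      exact habsR
    · have hevE : ∀ᶠ t in 𝓝[>] a, 0 < E t := hEcR.eventually (eventually_gt_nhds hcpos)
      have hmem : ({t | 0 < E t} ∩ Ioc a q) ∈ 𝓝[>] a :=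
        inter_mem hevE (Ioc_mem_nhdsGT_of_mem ⟨le_refl a, haq⟩)
      obtain ⟨r, har, hr⟩ := mem_nhdsGT_iff_exists_Ioc_subset.1 hmem
      have har' : a < r := har
      have hrq : Ioc a r ⊆ Ioc a q := fun x hx => (hr hx).2
      have hJI : Ioc a r ⊆ I \ {a} := fun x hx => hIocI (hrq hx)
      obtain ⟨ξ₀, hξ₀, hval₀⟩ := hMVTR r (hrq ⟨har', le_refl r⟩)
      have hξ₀J : ξ₀ ∈ Ioc a r := ⟨hξ₀.1, hξ₀.2.le⟩
      have hσr : 0 < σ r := by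
        have h1 : σ r = Real.sqrt (s r) := by simp [hσdef, not_le_of_gt har']
        rw [h1]
        exact Real.sqrt_pos.2 (hpos r (hJI ⟨har', le_refl r⟩))
      have hg₀ : 0 < g ξ₀ := by
        rw [hval₀]
        exact div_pos hσr (by linarith)
      have hsign : ∀ t ∈ Ioc a r, 0 < g t := by
        intro t hht
        rcases lt_trichotomy (g t) 0 with hlt | heq0 | hgt
        · exfalso
          have hsubJ : uIcc t ξ₀ ⊆ Ioc a r := Set.ordConnected_Ioc.uIcc_subset hht hξ₀J
          have hcg : ContinuousOn g (uIcc t ξ₀) := by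
            intro x hx
            have hxJ := hsubJ hx
            exact (hgcont x (hJI hxJ).1 (by simpa using (hJI hxJ).2)).continuousWithinAt
          have h0mem : (0:ℝ) ∈ uIcc (g t) (g ξ₀) := by
            rw [mem_uIcc]; left; exact ⟨hlt.le, hg₀.le⟩
          obtain ⟨z, hz, hz0⟩ := intermediate_value_uIcc hcg h0mem
          have hzJ := hsubJ hz
          have hEz : 0 < E z := (hr hzJ).1
          rw [← hEg z (hJI hzJ).1 (by simpa using (hJI hzJ).2), hz0] at hEz
          norm_num at hEz
        · exfalso
          have hEt : 0 < E t := (hr hht).1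
          rw [← hEg t (hJI hht).1 (by simpa using (hJI hht).2), heq0] at hEt
          norm_num at hEt
        · exact hgt
      refine habsR.congr' ?_
      filter_upwards [Ioc_mem_nhdsGT_of_mem (⟨le_refl a, har'⟩ : a ∈ Ico a r)] with t hht
      rw [abs_of_pos (hsign t hht)]
  have hgL : Tendsto g (𝓝[<] a) (𝓝 L) := by
    rcases eq_or_lt_of_le hcnn with hc0 | hcpos
    · have hL0 : L = 0 := by rw [hLdef, ← hc0, Real.sqrt_zero]
      rw [hL0]
      rw [tendsto_zero_iff_abs_tendsto_zero]
      rw [hL0] at habsL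
      exact habsL
    · have hevE : ∀ᶠ t in 𝓝[<] a, 0 < E t := hEcL.eventually (eventually_gt_nhds hcpos)
      have hmem : ({t | 0 < E t} ∩ Ico p a) ∈ 𝓝[<] a :=
        inter_mem hevE (Ico_mem_nhdsLT_of_mem ⟨hpa, le_refl a⟩)
      obtain ⟨r, har, hr⟩ := mem_nhdsLT_iff_exists_Ico_subset.1 hmem
      have har' : r < a := har
      have hrp : Ico r a ⊆ Ico p a := fun x hx => (hr hx).2
      have hJI : Ico r a ⊆ I \ {a} := fun x hx => hIcoI (hrp hx)
      obtain ⟨ξ₀, hξ₀, hval₀⟩ := hMVTL r (hrp ⟨le_refl r, har'⟩)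
      have hξ₀J : ξ₀ ∈ Ico r a := ⟨hξ₀.1.le, hξ₀.2⟩
      have hσr : σ r < 0 := by
        have h1 : σ r = -Real.sqrt (s r) := by simp [hσdef, le_of_lt har']
        rw [h1, neg_lt, neg_zero]
        exact Real.sqrt_pos.2 (hpos r (hJI ⟨le_refl r, har'⟩))
      have hg₀ : 0 < g ξ₀ := by
        rw [hval₀]
        apply div_pos_of_neg_of_neg hσr
        linarith
      have hsign : ∀ t ∈ Ico r a, 0 < g t := by
        intro t hht
        rcases lt_trichotomy (g t) 0 with hlt | heq0 | hgt
        · exfalso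
          have hsubJ : uIcc t ξ₀ ⊆ Ico r a := Set.ordConnected_Ico.uIcc_subset hht hξ₀J
          have hcg : ContinuousOn g (uIcc t ξ₀) := by
            intro x hx
            have hxJ := hsubJ hx
            exact (hgcont x (hJI hxJ).1 (by simpa using (hJI hxJ).2)).continuousWithinAt
          have h0mem : (0:ℝ) ∈ uIcc (g t) (g ξ₀) := by
            rw [mem_uIcc]; left; exact ⟨hlt.le, hg₀.le⟩
          obtain ⟨z, hz, hz0⟩ := intermediate_value_uIcc hcg h0mem
          have hzJ := hsubJ hz
          have hEz : 0 < E z := (hr hzJ).1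
          rw [← hEg z (hJI hzJ).1 (by simpa using (hJI hzJ).2), hz0] at hEz
          norm_num at hEz
        · exfalso
          have hEt : 0 < E t := (hr hht).1
          rw [← hEg t (hJI hht).1 (by simpa using (hJI hht).2), heq0] at hEt
          norm_num at hEt
        · exact hgt
      refine habsL.congr' ?_
      filter_upwards [Ico_mem_nhdsLT_of_mem (⟨har', le_refl a⟩ : a ∈ Ioc r a)] with t hht
      rw [abs_of_pos (hsign t hht)]
  have hgNe : Tendsto g (𝓝[≠] a) (𝓝 L) := by
    rw [← nhdsLT_sup_nhdsGT]
    exact tendsto_sup.2 ⟨hgL, hgR⟩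
  have hdσtend : Tendsto (deriv σ) (𝓝[≠] a) (𝓝 L) := by
    refine hgNe.congr' ?_
    filter_upwards [hIne] with t ht
    exact (hderiv t ht.1 (by simpa using ht.2)).symm
  have hFt : Tendsto F (𝓝 a) (𝓝 0) := by
    have h1 : Tendsto (fun t : ℝ => σ t * (3 * σ t ^ 2 + 2 * t) * (σ t ^ 2 + 2 * t) / 4) (𝓝 a)
        (𝓝 (0 * (3 * 0 ^ 2 + 2 * a) * (0 ^ 2 + 2 * a) / 4)) := by
      refine Tendsto.div_const ?_ 4
      refine Tendsto.mul (Tendsto.mul hσtend ?_) ?_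
      · exact (((hσtend.pow 2).const_mul 3).add (tendsto_id.const_mul 2))
      · exact ((hσtend.pow 2).add (tendsto_id.const_mul 2))
    simpa using h1
  have hddtend : Tendsto (fun t => deriv (deriv σ) t) (𝓝[≠] a) (𝓝 0) := by
    refine (hFt.mono_left nhdsWithin_le_nhds).congr' ?_
    filter_upwards [hIne] with t ht
    exact ((hdd t ht.1 (by simpa using ht.2)).deriv).symm
  have hD2R : HasDerivWithinAt (deriv σ) 0 (Ici a) a := by
    have hdiffR : DifferentiableOn ℝ (deriv σ) (Ioo a q) := by
      intro x hx
      have hxI := hIocI ⟨hx.1, hx.2.le⟩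
      exact ((hdd x hxI.1 (by simpa using hxI.2)).differentiableAt).differentiableWithinAt
    apply hasDerivWithinAt_Ici_of_tendsto_deriv hdiffR ?_ (Ioo_mem_nhdsGT haq) ?_
    · have h1 : Tendsto (deriv σ) (𝓝[Ioo a q] a) (𝓝 L) :=
        hdσtend.mono_left (nhdsWithin_mono a (fun x hx => ne_of_gt hx.1))
      rw [ContinuousWithinAt, hderiva]
      exact h1
    · exact hddtend.mono_left (nhdsWithin_mono a (fun x (hx : x ∈ Ioi a) => ne_of_gt hx))
  have hD2L : HasDerivWithinAt (deriv σ) 0 (Iic a) a := by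
    have hdiffL : DifferentiableOn ℝ (deriv σ) (Ioo p a) := by
      intro x hx
      have hxI := hIcoI ⟨hx.1.le, hx.2⟩
      exact ((hdd x hxI.1 (by simpa using hxI.2)).differentiableAt).differentiableWithinAt
    apply hasDerivWithinAt_Iic_of_tendsto_deriv hdiffL ?_ (Ioo_mem_nhdsLT hpa) ?_
    · have h1 : Tendsto (deriv σ) (𝓝[Ioo p a] a) (𝓝 L) :=
        hdσtend.mono_left (nhdsWithin_mono a (fun x hx => ne_of_lt hx.2))
      rw [ContinuousWithinAt, hderiva]
      exact h1
    · exact hddtend.mono_left (nhdsWithin_mono a (fun x (hx : x ∈ Iio a) => ne_of_lt hx))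
  have hD2 : HasDerivAt (deriv σ) 0 a := by
    have hu := hD2L.union hD2R
    rw [Iic_union_Ici] at hu
    exact hasDerivWithinAt_univ.1 hu
  refine ⟨fun t ht => hσdiff t ht, fun t ht => ?_, fun t ht => ?_⟩
  · rcases eq_or_ne t a with rfl | hta
    · exact hD2.differentiableAt
    · exact (hdd t ht hta).differentiableAt
  · rcases eq_or_ne t a with rfl | hta
    · rw [hD2.deriv]
      simp [h0]
    · rw [(hdd t ht hta).deriv]
      show 4 * F t = σ t * (3 * σ t ^ 2 + 2 * t) * (σ t ^ 2 + 2 * t)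
      simp only [hFdef]
      ring
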